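/- arXiv:2601.03544 — 2 statements merged into one kernel-verified Lean document; each statement's English description precedes it below -/
import Mathlib

section
/- Let (V, ω) be a finite-dimensional real symplectic vector space, C ⊆ V a coisotropic subspace (C^ω ⊆ C), and L ⊆ V ⊗ ℂ a complex Lagrangian subspace with respect to the complexified form ω_ℂ. Then the image L₀ = π₀(L ∩ C_ℂ) under the reduction map π₀ : C → C/C^ω is a complex Lagrangian subspace of (C/C^ω) ⊗ ℂ. -/
open scoped TensorProduct

/-- The symplectic complement of a subspace with respect to a bilinear form. -/
def SympComp {R M : Type*} [CommRing R] [AddCommGroup M] [Module R M]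
    (B : M →ₗ[R] M →ₗ[R] R) (C : Submodule R M) : Submodule R M where
  carrier := {v | ∀ c ∈ C, B v c = 0}
  add_mem' := by
    intro a b ha hb c hc
    simp [map_add, LinearMap.add_apply, ha c hc, hb c hc]
  zero_mem' := by
    intro c hc
    simp
  smul_mem' := by
    intro r a ha c hc
    simp [map_smul, LinearMap.smul_apply, ha c hc]

/-- A subspace is Lagrangian if it coincides with its symplectic complement. -/
def IsLagrangian {R M : Type*} [CommRing R] [AddCommGroup M] [Module R M]
    (B : M →ₗ[R] M →ₗ[R] R) (L : Submodule R M) : Prop :=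
  SympComp B L = L

/-- Complex conjugation on the complexification `ℂ ⊗[ℝ] V` of a real vector space. -/
noncomputable def conjTensor (V : Type*) [AddCommGroup V] [Module ℝ V] :
    (ℂ ⊗[ℝ] V) →ₗ[ℝ] (ℂ ⊗[ℝ] V) :=
  TensorProduct.map Complex.conjAe.toLinearMap LinearMap.id

lemma mem_sympComp {R M : Type*} [CommRing R] [AddCommGroup M] [Module R M]
    {B : M →ₗ[R] M →ₗ[R] R} {C : Submodule R M} {v : M} :
    v ∈ SympComp B C ↔ ∀ c ∈ C, B v c = 0 := Iff.rfl

lemma sympComp_eq_orthogonal {R M : Type*} [CommRing R] [AddCommGroup M] [Module R M]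
    {B : LinearMap.BilinForm R M} (hB : B.IsRefl) (C : Submodule R M) :
    SympComp B C = B.orthogonal C := by
  ext v
  constructor
  · intro h c hc
    exact hB _ _ (h c hc)
  · intro h c hc
    exact hB _ _ (h c hc)

lemma sympComp_sup {R M : Type*} [CommRing R] [AddCommGroup M] [Module R M]
    (B : LinearMap.BilinForm R M) (X Y : Submodule R M) :
    SympComp B (X ⊔ Y) = SympComp B X ⊓ SympComp B Y := by
  ext v
  constructor
  · intro h
    exact ⟨fun c hc => h c (Submodule.mem_sup_left hc),
           fun c hc => h c (Submodule.mem_sup_right hc)⟩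
  · rintro ⟨h1, h2⟩ c hc
    rcases Submodule.mem_sup.mp hc with ⟨x, hx, y, hy, rfl⟩
    rw [map_add, h1 x hx, h2 y hy, add_zero]

section Cplx

variable {V : Type*} [AddCommGroup V] [Module ℝ V]

noncomputable def tre : ℂ ⊗[ℝ] V →ₗ[ℝ] V :=
  TensorProduct.lift ((LinearMap.lsmul ℝ V).comp Complex.reLm)

noncomputable def tim : ℂ ⊗[ℝ] V →ₗ[ℝ] V :=
  TensorProduct.lift ((LinearMap.lsmul ℝ V).comp Complex.imLm)

@[simp] lemma tre_tmul (z : ℂ) (v : V) : tre (z ⊗ₜ[ℝ] v) = z.re • v := rfl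
@[simp] lemma tim_tmul (z : ℂ) (v : V) : tim (z ⊗ₜ[ℝ] v) = z.im • v := rfl

lemma decomp (w : ℂ ⊗[ℝ] V) :
    (1 : ℂ) ⊗ₜ[ℝ] tre w + Complex.I ⊗ₜ[ℝ] tim w = w := by
  induction w using TensorProduct.induction_on with
  | zero => simp
  | tmul z v =>
      rw [tre_tmul, tim_tmul, TensorProduct.tmul_smul, TensorProduct.tmul_smul,
        TensorProduct.smul_tmul', TensorProduct.smul_tmul', ← TensorProduct.add_tmul]
      congr 1
      simp [Complex.real_smul]
  | add x y hx hy =>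
      rw [map_add, map_add, TensorProduct.tmul_add, TensorProduct.tmul_add,
        add_add_add_comm, hx, hy]

end Cplx

section Cplx2

variable {V : Type*} [AddCommGroup V] [Module ℝ V]

lemma baseChange_apply_one (ω : LinearMap.BilinForm ℝ V) (w : ℂ ⊗[ℝ] V) (m : V) :
    ω.baseChange ℂ w ((1:ℂ) ⊗ₜ[ℝ] m)
      = (ω (tre w) m : ℂ) + (ω (tim w) m : ℂ) * Complex.I := by
  conv_lhs => rw [← decomp w]
  rw [map_add, LinearMap.add_apply, LinearMap.BilinForm.baseChange_tmul,
    LinearMap.BilinForm.baseChange_tmul]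
  simp [Complex.real_smul]

lemma complex_comb_eq_zero {r s : ℝ} (h : (r:ℂ) + (s:ℂ) * Complex.I = 0) :
    r = 0 ∧ s = 0 := by
  simpa [Complex.ext_iff] using h

lemma baseChange_skew {ω : LinearMap.BilinForm ℝ V} (halt : ∀ v, ω v v = 0)
    (x y : ℂ ⊗[ℝ] V) : ω.baseChange ℂ x y = - ω.baseChange ℂ y x := by
  have hskew : ∀ a b : V, ω a b = - ω b a := by
    intro a b
    have := (show LinearMap.IsAlt ω from halt).neg b a
    linarith [this]
  induction x using TensorProduct.induction_on with
  | zero => simp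
  | add p q hp hq => rw [map_add, LinearMap.add_apply, hp, hq, map_add]; ring
  | tmul z a =>
      induction y using TensorProduct.induction_on with
      | zero => simp
      | add p q hp hq => rw [map_add, map_add, LinearMap.add_apply, hp, hq]; ring
      | tmul w b =>
          rw [LinearMap.BilinForm.baseChange_tmul, LinearMap.BilinForm.baseChange_tmul,
            hskew a b, neg_smul, mul_comm z w]

lemma baseChange_isRefl {ω : LinearMap.BilinForm ℝ V} (halt : ∀ v, ω v v = 0) :
    (ω.baseChange ℂ).IsRefl := by
  intro x y h
  rw [baseChange_skew halt, h, neg_zero]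

lemma baseChange_nondegenerate {ω : LinearMap.BilinForm ℝ V} (halt : ∀ v, ω v v = 0)
    (hnd : ω.Nondegenerate) : (ω.baseChange ℂ).Nondegenerate := by
  refine (LinearMap.IsRefl.nondegenerate_iff_separatingLeft (baseChange_isRefl halt)).mpr ?_
  intro m hm
  have key : ∀ v : V, ω (tre m) v = 0 ∧ ω (tim m) v = 0 := by
    intro v
    exact complex_comb_eq_zero ((baseChange_apply_one ω m v) ▸ hm ((1:ℂ) ⊗ₜ[ℝ] v))
  have h1 : tre m = 0 := hnd.1 _ (fun v => (key v).1)
  have h2 : tim m = 0 := hnd.1 _ (fun v => (key v).2)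
  rw [← decomp m, h1, h2, TensorProduct.tmul_zero, TensorProduct.tmul_zero, add_zero]

lemma sympComp_baseChange (ω : LinearMap.BilinForm ℝ V) (M : Submodule ℝ V) :
    SympComp (ω.baseChange ℂ) (M.baseChange ℂ) = (SympComp ω M).baseChange ℂ := by
  apply le_antisymm
  · intro w hw
    have key : ∀ m ∈ M, ω (tre w) m = 0 ∧ ω (tim w) m = 0 := by
      intro m hm
      exact complex_comb_eq_zero ((baseChange_apply_one ω w m) ▸
        hw ((1:ℂ) ⊗ₜ[ℝ] m) (Submodule.tmul_mem_baseChange_of_mem 1 hm))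
    have ha : tre w ∈ SympComp ω M := fun m hm => (key m hm).1
    have hb : tim w ∈ SympComp ω M := fun m hm => (key m hm).2
    rw [← decomp w]
    exact Submodule.add_mem _ (Submodule.tmul_mem_baseChange_of_mem _ ha)
      (Submodule.tmul_mem_baseChange_of_mem _ hb)
  · rw [Submodule.baseChange_eq_span, Submodule.span_le]
    rintro x ⟨n, hn, rfl⟩
    intro y hy
    have hker : M.baseChange ℂ ≤ LinearMap.ker (ω.baseChange ℂ (TensorProduct.mk ℝ ℂ V 1 n)) := by
      rw [Submodule.baseChange_eq_span, Submodule.span_le]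
      rintro z ⟨m, hm, rfl⟩
      simp only [SetLike.mem_coe, LinearMap.mem_ker]
      show ω.baseChange ℂ ((1:ℂ) ⊗ₜ[ℝ] n) ((1:ℂ) ⊗ₜ[ℝ] m) = 0
      rw [LinearMap.BilinForm.baseChange_tmul, hn m hm, zero_smul]
    exact hker hy

end Cplx2

section Maps

variable {V W : Type*} [AddCommGroup V] [Module ℝ V] [AddCommGroup W] [Module ℝ W]

lemma baseChange_map (f : V →ₗ[ℝ] W) (p : Submodule ℝ V) :
    Submodule.map (f.baseChange ℂ) (p.baseChange ℂ) = (p.map f).baseChange ℂ := by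
  rw [Submodule.baseChange_eq_span, Submodule.baseChange_eq_span, Submodule.map_span]
  congr 1
  simp only [Submodule.map_coe, Set.image_image, TensorProduct.mk_apply,
    LinearMap.baseChange_tmul]

lemma baseChange_mono {p q : Submodule ℝ V} (h : p ≤ q) :
    p.baseChange ℂ ≤ q.baseChange ℂ := by
  rw [Submodule.baseChange_eq_span, Submodule.baseChange_eq_span]
  exact Submodule.span_mono (Set.image_mono h)

lemma range_baseChange (f : V →ₗ[ℝ] W) :
    LinearMap.range (f.baseChange ℂ) = (LinearMap.range f).baseChange ℂ := by
  rw [← Submodule.map_top, ← Submodule.baseChange_top (A := ℂ) (M := V),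
    baseChange_map, Submodule.map_top]

lemma baseChange_ker_le (f : V →ₗ[ℝ] W) :
    (LinearMap.ker f).baseChange ℂ ≤ LinearMap.ker (f.baseChange ℂ) := by
  rw [Submodule.baseChange_eq_span, Submodule.span_le]
  rintro x ⟨v, hv, rfl⟩
  simp only [SetLike.mem_coe, LinearMap.mem_ker, TensorProduct.mk_apply,
    LinearMap.baseChange_tmul]
  rw [LinearMap.mem_ker.mp hv, TensorProduct.tmul_zero]

lemma baseChange_surjective (f : V →ₗ[ℝ] W) (hf : Function.Surjective f) :
    Function.Surjective (f.baseChange ℂ) := by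
  intro y
  induction y using TensorProduct.induction_on with
  | zero => exact ⟨0, map_zero _⟩
  | tmul z w =>
      obtain ⟨v, rfl⟩ := hf w
      exact ⟨z ⊗ₜ[ℝ] v, by rw [LinearMap.baseChange_tmul]⟩
  | add a b ha hb =>
      obtain ⟨x, rfl⟩ := ha
      obtain ⟨y, rfl⟩ := hb
      exact ⟨x + y, map_add _ _ _⟩

end Maps

theorem coisotropic_reduction_lagrangian_aux
    {V : Type*} [AddCommGroup V] [Module ℝ V] [FiniteDimensional ℝ V]
    (ω : LinearMap.BilinForm ℝ V) (halt : ∀ v, ω v v = 0)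
    (hnd : LinearMap.BilinForm.Nondegenerate ω)
    (C : Submodule ℝ V) (hcoiso : SympComp ω C ≤ C)
    (L : Submodule ℂ (ℂ ⊗[ℝ] V))
    (hL : SympComp (LinearMap.BilinForm.baseChange ℂ ω) L = L)
    (ω₀ : LinearMap.BilinForm ℝ (C ⧸ Submodule.comap C.subtype (SympComp ω C)))
    (hω₀ : ∀ c c' : C,
      ω₀ ((Submodule.comap C.subtype (SympComp ω C)).mkQ c)
          ((Submodule.comap C.subtype (SympComp ω C)).mkQ c') = ω (c : V) (c' : V)) :
    SympComp (LinearMap.BilinForm.baseChange ℂ ω₀)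
      (Submodule.map
        (LinearMap.baseChange ℂ (Submodule.comap C.subtype (SympComp ω C)).mkQ)
        (Submodule.comap (LinearMap.baseChange ℂ C.subtype) L)) =
      (Submodule.map
        (LinearMap.baseChange ℂ (Submodule.comap C.subtype (SympComp ω C)).mkQ)
        (Submodule.comap (LinearMap.baseChange ℂ C.subtype) L)) := by
  set Ω := LinearMap.BilinForm.baseChange ℂ ω with hΩ
  set π : ℂ ⊗[ℝ] C →ₗ[ℂ] ℂ ⊗[ℝ] (C ⧸ Submodule.comap C.subtype (SympComp ω C)) :=
    LinearMap.baseChange ℂ (Submodule.comap C.subtype (SympComp ω C)).mkQ with hπ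
  set ι : ℂ ⊗[ℝ] C →ₗ[ℂ] ℂ ⊗[ℝ] V := LinearMap.baseChange ℂ C.subtype with hι
  have hrefl : Ω.IsRefl := baseChange_isRefl halt
  have hndc : Ω.Nondegenerate := baseChange_nondegenerate halt hnd
  have hωrefl : ω.IsRefl := (show LinearMap.IsAlt ω from halt).isRefl
  have doubleOrth : ∀ X : Submodule ℂ (ℂ ⊗[ℝ] V),
      SympComp Ω (SympComp Ω X) = X := by
    intro X
    rw [sympComp_eq_orthogonal hrefl X, sympComp_eq_orthogonal hrefl,
      LinearMap.BilinForm.orthogonal_orthogonal hndc hrefl]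
  have realDouble : SympComp ω (SympComp ω C) = C := by
    rw [sympComp_eq_orthogonal hωrefl C, sympComp_eq_orthogonal hωrefl,
      LinearMap.BilinForm.orthogonal_orthogonal hnd hωrefl]
  have h2 : SympComp Ω ((SympComp ω C).baseChange ℂ) = C.baseChange ℂ := by
    rw [hΩ, sympComp_baseChange, realDouble]
  have hrange : LinearMap.range ι = C.baseChange ℂ := by
    rw [hι, range_baseChange, Submodule.range_subtype]
  have hmapK : Submodule.map ι
      ((Submodule.comap C.subtype (SympComp ω C)).baseChange ℂ)
      = (SympComp ω C).baseChange ℂ := by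
    rw [hι, baseChange_map, Submodule.map_comap_subtype, inf_eq_right.mpr hcoiso]
  have hkerπ : (Submodule.comap C.subtype (SympComp ω C)).baseChange ℂ
      ≤ LinearMap.ker π := by
    have := baseChange_ker_le (Submodule.comap C.subtype (SympComp ω C)).mkQ
    rwa [Submodule.ker_mkQ] at this
  have hsurj : Function.Surjective π :=
    baseChange_surjective _ (Submodule.mkQ_surjective _)
  have key : ∀ p q : ℂ ⊗[ℝ] C,
      (LinearMap.BilinForm.baseChange ℂ ω₀) (π p) (π q) = Ω (ι p) (ι q) := by
    intro p q
    induction p using TensorProduct.induction_on with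
    | zero => simp
    | add a b ha hb => simp only [map_add, LinearMap.add_apply, ha, hb]
    | tmul z c =>
        induction q using TensorProduct.induction_on with
        | zero => simp
        | add a b ha hb => simp only [map_add, ha, hb]
        | tmul w c' =>
            rw [hπ, hι, hΩ, LinearMap.baseChange_tmul, LinearMap.baseChange_tmul,
              LinearMap.baseChange_tmul, LinearMap.baseChange_tmul,
              LinearMap.BilinForm.baseChange_tmul, LinearMap.BilinForm.baseChange_tmul, hω₀]
            rfl
  have hbig : SympComp Ω (L ⊓ C.baseChange ℂ) = L ⊔ (SympComp ω C).baseChange ℂ := by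
    have hinf : L ⊓ C.baseChange ℂ = SympComp Ω (L ⊔ (SympComp ω C).baseChange ℂ) := by
      rw [sympComp_sup, hL, h2]
    rw [hinf, doubleOrth]
  apply le_antisymm
  · intro u hu
    obtain ⟨p, rfl⟩ := hsurj u
    have hpin : ι p ∈ SympComp Ω (L ⊓ C.baseChange ℂ) := by
      intro x hx
      obtain ⟨hxL, hxC⟩ := hx
      rw [← hrange] at hxC
      obtain ⟨q, rfl⟩ := hxC
      rw [← key p q]
      exact hu (π q) (Submodule.mem_map.mpr ⟨q, hxL, rfl⟩)
    rw [hbig] at hpin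
    obtain ⟨l, hl, n, hn, hsum⟩ := Submodule.mem_sup.mp hpin
    rw [← hmapK] at hn
    obtain ⟨k, hk, rfl⟩ := hn
    have hl' : ι (p - k) ∈ L := by
      rw [map_sub]
      have heq : ι p - ι k = l := by rw [← hsum]; abel
      rwa [heq]
    refine Submodule.mem_map.mpr ⟨p - k, hl', ?_⟩
    rw [map_sub, LinearMap.mem_ker.mp (hkerπ hk), sub_zero]
  · rintro u hu
    obtain ⟨p, hp, rfl⟩ := Submodule.mem_map.mp hu
    intro y hy
    obtain ⟨q, hq, rfl⟩ := Submodule.mem_map.mp hy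
    rw [key p q]
    have hp' : ι p ∈ SympComp Ω L := by rw [hL]; exact hp
    exact hp' (ι q) hq

/-- **Coisotropic reduction of complex Lagrangians.**  Let `(V, ω)` be a finite-dimensional
real symplectic vector space, `C ⊆ V` a coisotropic subspace and `L ⊆ V ⊗ ℂ` a complex
Lagrangian subspace with respect to the complexified form.  Then the image
`L₀ = π₀(L ∩ C_ℂ)` under (the complexification of) the reduction map `π₀ : C → C/C^ω`
is a complex Lagrangian subspace of `(C/C^ω) ⊗ ℂ` with respect to (the complexification of)
the reduced symplectic form. -/
theorem coisotropic_reduction_lagrangian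
    {V : Type*} [AddCommGroup V] [Module ℝ V] [FiniteDimensional ℝ V]
    (ω : LinearMap.BilinForm ℝ V) (halt : ∀ v, ω v v = 0)
    (hnd : LinearMap.BilinForm.Nondegenerate ω)
    (C : Submodule ℝ V) (hcoiso : SympComp ω C ≤ C)
    (L : Submodule ℂ (ℂ ⊗[ℝ] V))
    (hL : IsLagrangian (LinearMap.BilinForm.baseChange ℂ ω) L)
    (ω₀ : LinearMap.BilinForm ℝ (C ⧸ Submodule.comap C.subtype (SympComp ω C)))
    (hω₀ : ∀ c c' : C,
      ω₀ ((Submodule.comap C.subtype (SympComp ω C)).mkQ c)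
          ((Submodule.comap C.subtype (SympComp ω C)).mkQ c') = ω (c : V) (c' : V)) :
    IsLagrangian (LinearMap.BilinForm.baseChange ℂ ω₀)
      (Submodule.map
        (LinearMap.baseChange ℂ (Submodule.comap C.subtype (SympComp ω C)).mkQ)
        (Submodule.comap (LinearMap.baseChange ℂ C.subtype) L)) :=
  coisotropic_reduction_lagrangian_aux ω halt hnd C hcoiso L hL ω₀ hω₀
end

section
/- Let G be a connected Lie group and K ≤ G a compact subgroup with Lie algebras 𝔤, 𝔨. Then the fixed point set of the adjoint-induced K-action on 𝔤/𝔨 equals 𝔫_G(K)/𝔨, where 𝔫_G(K) is the Lie algebra of the normalizer N_G(K) = {g ∈ G | gKg⁻¹ = K}. In symbols: (𝔤/𝔨)^K = 𝔫_G(K)/𝔨. -/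
/-- The Lie algebra of a subgroup `H` of the group of units of a Banach algebra `A`,
consisting of those `X ∈ A` all of whose exponentials `exp(tX)` lie in `H`. -/
def lieAlgebraOf {A : Type*} [NormedRing A] [NormedAlgebra ℝ A] [CompleteSpace A]
    (H : Subgroup Aˣ) : Set A :=
  {X | ∀ t : ℝ, ∃ h ∈ H, (h : A) = NormedSpace.exp (t • X)}

open NormedSpace Filter Topology
set_option linter.unusedSectionVars false
set_option linter.unusedVariables false
set_option maxHeartbeats 1000000

noncomputable instance ratNormedAlgOfReal {B : Type*} [NormedRing B] [NormedAlgebra ℝ B] :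
    NormedAlgebra ℚ B :=
  NormedAlgebra.restrictScalars ℚ ℝ B

section Aux
variable {A : Type*} [NormedRing A] [NormedAlgebra ℝ A] [CompleteSpace A]

/-- Operator seminorm on `A` via left multiplication; submultiplicative with `ν 1 ≤ 1`. -/
noncomputable def nuA (x : A) : ℝ := ‖ContinuousLinearMap.mul ℝ A x‖

lemma nuA_nonneg (x : A) : 0 ≤ nuA x := norm_nonneg _

lemma nuA_le_norm (x : A) : nuA x ≤ ‖x‖ :=
  ContinuousLinearMap.opNorm_le_bound _ (norm_nonneg x) fun y => by
    simpa using norm_mul_le x y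

lemma norm_le_nuA (x : A) : ‖x‖ ≤ nuA x * ‖(1 : A)‖ := by
  have := (ContinuousLinearMap.mul ℝ A x).le_opNorm 1
  simpa [nuA] using this

lemma nuA_one : nuA (1 : A) ≤ 1 := by
  have h : ContinuousLinearMap.mul ℝ A (1 : A) = ContinuousLinearMap.id ℝ A := by
    ext y; simp
  rw [nuA, h]
  exact ContinuousLinearMap.norm_id_le

lemma nuA_mul (x y : A) : nuA (x * y) ≤ nuA x * nuA y := by
  have h : ContinuousLinearMap.mul ℝ A (x * y)
      = (ContinuousLinearMap.mul ℝ A x).comp (ContinuousLinearMap.mul ℝ A y) := by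
    ext z; simp [mul_assoc]
  rw [nuA, h]
  exact ContinuousLinearMap.opNorm_comp_le _ _

lemma nuA_add (x y : A) : nuA (x + y) ≤ nuA x + nuA y := by
  rw [nuA, map_add]; exact norm_add_le _ _

lemma nuA_smul (r : ℝ) (x : A) : nuA (r • x) = |r| * nuA x := by
  rw [nuA, map_smul]
  rw [norm_smul r ((ContinuousLinearMap.mul ℝ A) x), Real.norm_eq_abs]; rfl

lemma nuA_neg (x : A) : nuA (-x) = nuA x := by
  rw [nuA, map_neg, norm_neg]; rfl

lemma nuA_sub (x y : A) : nuA (x - y) ≤ nuA x + nuA y := by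
  rw [sub_eq_add_neg]; simpa [nuA_neg] using nuA_add x (-y)

lemma nuA_pow_le (x : A) (n : ℕ) : nuA (x ^ n) ≤ (nuA x) ^ n := by
  induction n with
  | zero => simpa using nuA_one
  | succ n ih =>
    calc nuA (x ^ (n+1)) = nuA (x * x ^ n) := by rw [pow_succ']
    _ ≤ nuA x * nuA (x ^ n) := nuA_mul _ _
    _ ≤ nuA x * (nuA x) ^ n := by
        exact mul_le_mul_of_nonneg_left ih (nuA_nonneg x)
    _ = (nuA x) ^ (n+1) := by ring

lemma nuA_tsum_le {f : ℕ → A} (hf : Summable fun n => ‖f n‖) :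
    nuA (∑' n, f n) ≤ ∑' n, nuA (f n) := by
  have hs : Summable f := hf.of_norm
  have hnu : Summable fun n => nuA (f n) :=
    Summable.of_nonneg_of_le (fun n => nuA_nonneg _) (fun n => nuA_le_norm _) hf
  rw [nuA, ContinuousLinearMap.map_tsum _ hs]
  calc ‖∑' n, ContinuousLinearMap.mul ℝ A (f n)‖ ≤ ∑' n, ‖ContinuousLinearMap.mul ℝ A (f n)‖ :=
        norm_tsum_le_tsum_norm hnu
  _ = ∑' n, nuA (f n) := rfl

lemma real_exp_tsum (r : ℝ) : Real.exp r = ∑' n : ℕ, r ^ n / n.factorial := by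
  rw [Real.exp_eq_exp_ℝ, exp_eq_tsum_div]

lemma nuA_exp_le (x : A) : nuA (exp x) ≤ Real.exp (nuA x) := by
  rw [exp_eq_tsum ℝ, real_exp_tsum]
  refine le_trans (nuA_tsum_le (norm_expSeries_summable' (𝕂 := ℝ) x)) ?_
  refine Summable.tsum_le_tsum (fun n => ?_) ?_ ?_
  · calc nuA ((n.factorial⁻¹ : ℝ) • x ^ n) = |(n.factorial⁻¹ : ℝ)| * nuA (x ^ n) := nuA_smul _ _
    _ ≤ (n.factorial⁻¹ : ℝ) * (nuA x) ^ n := by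
        rw [abs_of_nonneg (by positivity)]
        exact mul_le_mul_of_nonneg_left (nuA_pow_le x n) (by positivity)
    _ = (nuA x) ^ n / n.factorial := by ring
  · exact Summable.of_nonneg_of_le (fun n => nuA_nonneg _)
      (fun n => nuA_le_norm _) (norm_expSeries_summable' (𝕂 := ℝ) x)
  · exact Real.summable_pow_div_factorial _

lemma nuA_exp_sub_one_sub (x : A) :
    nuA (exp x - 1 - x) ≤ (nuA x) ^ 2 * Real.exp (nuA x) := by
  set f : ℕ → A := fun n => (n.factorial⁻¹ : ℝ) • x ^ n with hfdef
  have hsum : HasSum f (exp x) := exp_series_hasSum_exp' (𝕂 := ℝ) x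
  have hr2 : ∑ i ∈ Finset.range 2, f i = 1 + x := by
    simp [hfdef, Finset.sum_range_succ]
  have h2 : HasSum (fun n => f (n + 2)) (exp x - 1 - x) := by
    refine (hasSum_nat_add_iff (f := f) 2).mpr ?_
    rw [hr2, sub_sub, sub_add_cancel]
    exact hsum
  have hnorm : Summable fun n => ‖f (n + 2)‖ :=
    (summable_nat_add_iff 2).mpr (norm_expSeries_summable' (𝕂 := ℝ) x)
  rw [← h2.tsum_eq]
  refine le_trans (nuA_tsum_le hnorm) ?_
  have hRsum : Summable fun n : ℕ => (nuA x) ^ 2 * ((nuA x) ^ n / n.factorial) :=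
    (Real.summable_pow_div_factorial _).mul_left _
  refine le_trans (Summable.tsum_le_tsum (fun n => ?_) ?_ hRsum) ?_
  · calc nuA (f (n + 2)) = |((n+2).factorial⁻¹ : ℝ)| * nuA (x ^ (n + 2)) := nuA_smul _ _
    _ ≤ ((n+2).factorial⁻¹ : ℝ) * (nuA x) ^ (n + 2) := by
        rw [abs_of_nonneg (by positivity)]
        exact mul_le_mul_of_nonneg_left (nuA_pow_le x _) (by positivity)
    _ ≤ (n.factorial⁻¹ : ℝ) * (nuA x) ^ (n + 2) := by
        refine mul_le_mul_of_nonneg_right ?_ (pow_nonneg (nuA_nonneg x) _)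
        rw [inv_le_inv₀ (by exact_mod_cast Nat.factorial_pos _) (by exact_mod_cast Nat.factorial_pos _)]
        exact_mod_cast Nat.factorial_le (by omega)
    _ = (nuA x) ^ 2 * ((nuA x) ^ n / n.factorial) := by ring
  · exact Summable.of_nonneg_of_le (fun n => nuA_nonneg _) (fun n => nuA_le_norm _) hnorm
  · rw [tsum_mul_left, real_exp_tsum]

lemma nuA_zero : nuA (0 : A) = 0 := by rw [nuA, map_zero, norm_zero]

lemma nuA_sub_le (x y : A) : nuA (x - y) ≤ nuA x + nuA y := by
  rw [sub_eq_add_neg]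
  simpa [nuA_neg] using nuA_add x (-y)

/-- Second-order estimate on `exp(sB)exp(sC) - exp(s(B+C))`, uniform over bounded `B`, `C`. -/
lemma nuA_exp_mul_exp_sub (b c : ℝ) (hb : 0 ≤ b) (hc : 0 ≤ c) :
    ∃ M : ℝ, 0 ≤ M ∧ ∀ B C : A, nuA B ≤ b → nuA C ≤ c → ∀ s : ℝ, |s| ≤ 1 →
      nuA (exp (s • B) * exp (s • C) - exp (s • (B + C))) ≤ s ^ 2 * M := by
  refine ⟨c^2*Real.exp c + b*c + b*(c^2*Real.exp c)
      + b^2*Real.exp b*(1 + c + c^2*Real.exp c)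
      + (b+c)^2*Real.exp (b+c), by positivity, ?_⟩
  intro B C hB hC s hs
  set P := s • B with hPdef
  set Q := s • C with hQdef
  have hR : s • (B + C) = P + Q := smul_add s B C
  set E₁ := exp P - 1 - P with hE1def
  set E₂ := exp Q - 1 - Q with hE2def
  set E₃ := exp (P + Q) - 1 - (P + Q) with hE3def
  have hexpP : exp P = 1 + P + E₁ := by rw [hE1def]; abel
  have hexpQ : exp Q = 1 + Q + E₂ := by rw [hE2def]; abel
  have hexpR : exp (P + Q) = 1 + (P + Q) + E₃ := by rw [hE3def]; abel
  have key : exp P * exp Q - exp (P + Q)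
      = E₂ + P * Q + P * E₂ + E₁ * (1 + Q + E₂) - E₃ := by
    rw [hexpP, hexpQ, hexpR]
    noncomm_ring
  -- basic bounds
  have hs2 : (0:ℝ) ≤ s ^ 2 := sq_nonneg s
  have hPn : nuA P ≤ |s| * b := by
    rw [hPdef, nuA_smul]; exact mul_le_mul_of_nonneg_left hB (abs_nonneg s)
  have hQn : nuA Q ≤ |s| * c := by
    rw [hQdef, nuA_smul]; exact mul_le_mul_of_nonneg_left hC (abs_nonneg s)
  have hPb : nuA P ≤ b := hPn.trans (by nlinarith [abs_nonneg s])
  have hQc : nuA Q ≤ c := hQn.trans (by nlinarith [abs_nonneg s])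
  have hRn : nuA (P + Q) ≤ |s| * (b + c) := by
    refine (nuA_add P Q).trans ?_
    calc nuA P + nuA Q ≤ |s| * b + |s| * c := add_le_add hPn hQn
    _ = |s| * (b + c) := by ring
  have hRbc : nuA (P + Q) ≤ b + c := hRn.trans (by nlinarith [abs_nonneg s])
  -- second order error bounds
  have bndE : ∀ (Z : A) (z : ℝ), 0 ≤ z → nuA Z ≤ |s| * z → nuA Z ≤ z →
      nuA (exp Z - 1 - Z) ≤ s ^ 2 * (z ^ 2 * Real.exp z) := by
    intro Z z hz h1 h2
    refine (nuA_exp_sub_one_sub Z).trans ?_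
    have e1 : Real.exp (nuA Z) ≤ Real.exp z := Real.exp_le_exp.mpr h2
    have e2 : nuA Z ^ 2 ≤ (|s| * z) ^ 2 :=
      pow_le_pow_left₀ (nuA_nonneg Z) h1 2
    have e3 : (|s| * z) ^ 2 = s ^ 2 * z ^ 2 := by
      rw [mul_pow, sq_abs]
    nlinarith [nuA_nonneg Z, Real.exp_pos (nuA Z), Real.exp_pos z, sq_nonneg (nuA Z)]
  have hE1 : nuA E₁ ≤ s ^ 2 * (b ^ 2 * Real.exp b) := bndE P b hb hPn hPb
  have hE2 : nuA E₂ ≤ s ^ 2 * (c ^ 2 * Real.exp c) := bndE Q c hc hQn hQc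
  have hE3 : nuA E₃ ≤ s ^ 2 * ((b + c) ^ 2 * Real.exp (b + c)) :=
    bndE (P + Q) (b + c) (by linarith) hRn hRbc
  have hPQ : nuA (P * Q) ≤ s ^ 2 * (b * c) := by
    refine (nuA_mul P Q).trans ?_
    calc nuA P * nuA Q ≤ (|s| * b) * (|s| * c) :=
      mul_le_mul hPn hQn (nuA_nonneg Q) (by positivity)
    _ = s ^ 2 * (b * c) := by rw [← sq_abs s]; ring
  have hPE2 : nuA (P * E₂) ≤ s ^ 2 * (b * (c ^ 2 * Real.exp c)) := by
    refine (nuA_mul P E₂).trans ?_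
    calc nuA P * nuA E₂ ≤ b * (s ^ 2 * (c ^ 2 * Real.exp c)) :=
      mul_le_mul hPb hE2 (nuA_nonneg E₂) hb
    _ = s ^ 2 * (b * (c ^ 2 * Real.exp c)) := by ring
  have hE1Q : nuA (E₁ * (1 + Q + E₂)) ≤ s ^ 2 * (b ^ 2 * Real.exp b * (1 + c + c^2*Real.exp c)) := by
    refine (nuA_mul E₁ (1 + Q + E₂)).trans ?_
    have h1QE : nuA (1 + Q + E₂) ≤ 1 + c + c^2*Real.exp c := by
      refine ((nuA_add _ _).trans (add_le_add (nuA_add _ _) le_rfl)).trans ?_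
      have hss : s ^ 2 ≤ 1 := by nlinarith [sq_abs s, abs_nonneg s, hs]
      have hc2 : nuA E₂ ≤ c^2*Real.exp c := by
        refine hE2.trans ?_
        have := mul_le_mul_of_nonneg_right hss (by positivity : (0:ℝ) ≤ c^2*Real.exp c)
        linarith
      have := nuA_one (A := A)
      linarith
    calc nuA E₁ * nuA (1 + Q + E₂) ≤ (s ^ 2 * (b ^ 2 * Real.exp b)) * (1 + c + c^2*Real.exp c) :=
      mul_le_mul hE1 h1QE (nuA_nonneg _) (by positivity)
    _ = s ^ 2 * (b ^ 2 * Real.exp b * (1 + c + c^2*Real.exp c)) := by ring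
  have key2 : exp (s • (B + C)) = exp (P + Q) := by rw [hR]
  rw [key2, key]
  calc nuA (E₂ + P * Q + P * E₂ + E₁ * (1 + Q + E₂) - E₃)
      ≤ nuA (E₂ + P * Q + P * E₂ + E₁ * (1 + Q + E₂)) + nuA E₃ := nuA_sub_le _ _
    _ ≤ nuA (E₂ + P * Q + P * E₂) + nuA (E₁ * (1 + Q + E₂)) + nuA E₃ := by
        have := nuA_add (E₂ + P * Q + P * E₂) (E₁ * (1 + Q + E₂)); linarith
    _ ≤ nuA (E₂ + P * Q) + nuA (P * E₂) + nuA (E₁ * (1 + Q + E₂)) + nuA E₃ := by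
        have := nuA_add (E₂ + P * Q) (P * E₂); linarith
    _ ≤ nuA E₂ + nuA (P * Q) + nuA (P * E₂) + nuA (E₁ * (1 + Q + E₂)) + nuA E₃ := by
        have := nuA_add E₂ (P * Q); linarith
    _ ≤ s ^ 2 * (c^2*Real.exp c + b*c + b*(c^2*Real.exp c)
        + b^2*Real.exp b*(1 + c + c^2*Real.exp c)
        + (b+c)^2*Real.exp (b+c)) := by linarith

/-- Difference of `n`-th powers. -/
lemma nuA_pow_sub_pow (a b : A) (m : ℝ) (hm : 1 ≤ m) (ha : nuA a ≤ m) (hb : nuA b ≤ m) :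
    ∀ n : ℕ, nuA (a ^ n - b ^ n) ≤ n * m ^ n * nuA (a - b) := by
  intro n
  induction n with
  | zero => simp [nuA_zero]
  | succ n ih =>
    have key : a ^ (n+1) - b ^ (n+1) = (a - b) * a ^ n + b * (a ^ n - b ^ n) := by
      rw [sub_mul, mul_sub, ← pow_succ', ← pow_succ']
      abel
    have h1 : nuA (a ^ (n+1) - b ^ (n+1)) ≤ nuA (a - b) * nuA (a ^ n)
        + nuA b * nuA (a ^ n - b ^ n) := by
      rw [key]
      refine (nuA_add _ _).trans (add_le_add (nuA_mul _ _) (nuA_mul _ _))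
    have hbn : nuA (a ^ n) ≤ m ^ n :=
      (nuA_pow_le a n).trans (pow_le_pow_left₀ (nuA_nonneg a) ha n)
    have hm0 : (0:ℝ) ≤ m := le_trans zero_le_one hm
    have hmn : m ^ n ≤ m ^ (n+1) := pow_le_pow_right₀ hm (by omega)
    have hmn0 : (0:ℝ) ≤ m ^ n := pow_nonneg hm0 n
    have hd0 : (0:ℝ) ≤ nuA (a - b) := nuA_nonneg _
    have h2 : nuA b * nuA (a ^ n - b ^ n) ≤ m * (n * m ^ n * nuA (a - b)) := by
      refine mul_le_mul hb ih (nuA_nonneg _) hm0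
    have h3 : nuA (a - b) * nuA (a ^ n) ≤ nuA (a - b) * m ^ (n+1) := by
      refine mul_le_mul_of_nonneg_left (hbn.trans hmn) hd0
    have e1 : m * ((n:ℝ) * m ^ n * nuA (a - b)) = (n:ℝ) * m ^ (n+1) * nuA (a - b) := by ring
    have e2 : ((n:ℝ) + 1) * m ^ (n+1) * nuA (a - b)
        = (n:ℝ) * m ^ (n+1) * nuA (a - b) + m ^ (n+1) * nuA (a - b) := by ring
    push_cast
    linarith [h1, h2, h3, e1, e2, mul_le_mul_of_nonneg_right hmn hd0]

/-- The Lie–Trotter product formula. -/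
theorem trotter (B C : A) :
    Tendsto (fun n : ℕ => (exp ((n:ℝ)⁻¹ • B) * exp ((n:ℝ)⁻¹ • C)) ^ n)
      atTop (𝓝 (exp (B + C))) := by
  obtain ⟨M, hM0, hM⟩ := nuA_exp_mul_exp_sub (A := A) (nuA B) (nuA C)
    (nuA_nonneg B) (nuA_nonneg C)
  set β := nuA B + nuA C with hβ
  have hβ0 : 0 ≤ β := add_nonneg (nuA_nonneg B) (nuA_nonneg C)
  have key : ∀ n : ℕ, 1 ≤ n →
      ‖(exp ((n:ℝ)⁻¹ • B) * exp ((n:ℝ)⁻¹ • C)) ^ n - exp (B + C)‖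
        ≤ Real.exp β * M * (n:ℝ)⁻¹ * ‖(1:A)‖ := by
    intro n hn
    have hn0 : (0:ℝ) < n := by exact_mod_cast hn
    set s : ℝ := (n:ℝ)⁻¹ with hsdef
    have hs0 : 0 < s := inv_pos.mpr hn0
    have hs1 : |s| ≤ 1 := by
      rw [abs_of_pos hs0]
      exact inv_le_one_of_one_le₀ (by exact_mod_cast Nat.one_le_cast.mpr hn)
    set a := exp (s • B) * exp (s • C) with hadef
    set b' := exp (s • (B + C)) with hbdef
    have hL : exp (B + C) = b' ^ n := by
      rw [hbdef, ← exp_nsmul]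
      congr 1
      rw [← Nat.cast_smul_eq_nsmul ℝ, smul_smul, mul_inv_cancel₀ (ne_of_gt hn0), one_smul]
    set m : ℝ := Real.exp (s * β) with hmdef
    have hm1 : 1 ≤ m := Real.one_le_exp (by positivity)
    have hma : nuA a ≤ m := by
      refine (nuA_mul _ _).trans ?_
      have h1 : nuA (exp (s • B)) ≤ Real.exp (s * nuA B) := by
        refine (nuA_exp_le _).trans (Real.exp_le_exp.mpr ?_)
        rw [nuA_smul, abs_of_pos hs0]
      have h2 : nuA (exp (s • C)) ≤ Real.exp (s * nuA C) := by
        refine (nuA_exp_le _).trans (Real.exp_le_exp.mpr ?_)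
        rw [nuA_smul, abs_of_pos hs0]
      calc nuA (exp (s • B)) * nuA (exp (s • C))
          ≤ Real.exp (s * nuA B) * Real.exp (s * nuA C) :=
            mul_le_mul h1 h2 (nuA_nonneg _) (Real.exp_pos _).le
        _ = m := by rw [hmdef, ← Real.exp_add, hβ]; ring_nf
    have hmb : nuA b' ≤ m := by
      refine (nuA_exp_le _).trans (Real.exp_le_exp.mpr ?_)
      rw [nuA_smul, abs_of_pos hs0]
      exact mul_le_mul_of_nonneg_left (nuA_add B C) hs0.le
    have hmn : m ^ n = Real.exp β := by
      rw [hmdef, ← Real.exp_nat_mul]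
      congr 1
      rw [hsdef, ← mul_assoc, mul_inv_cancel₀ (ne_of_gt hn0), one_mul]
    have hd : nuA (a - b') ≤ s ^ 2 * M := hM B C le_rfl le_rfl s hs1
    have hpow : nuA (a ^ n - b' ^ n) ≤ n * m ^ n * (s ^ 2 * M) := by
      refine (nuA_pow_sub_pow a b' m hm1 hma hmb n).trans ?_
      exact mul_le_mul_of_nonneg_left hd (by positivity)
    have hns : (n:ℝ) * s ^ 2 = s := by
      rw [hsdef]; field_simp
    rw [hL]
    refine (norm_le_nuA _).trans ?_
    refine mul_le_mul_of_nonneg_right ?_ (norm_nonneg _)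
    calc nuA (a ^ n - b' ^ n) ≤ n * m ^ n * (s ^ 2 * M) := hpow
      _ = Real.exp β * M * s := by
          rw [hmn, show (n:ℝ) * Real.exp β * (s^2*M) = Real.exp β * M * ((n:ℝ) * s^2) from by ring, hns]
  -- conclude
  have h0 : Tendsto (fun n : ℕ => Real.exp β * M * (n:ℝ)⁻¹ * ‖(1:A)‖) atTop (𝓝 0) := by
    have hlim : Tendsto (fun n : ℕ => ((n:ℝ))⁻¹) atTop (𝓝 0) := tendsto_inv_atTop_nhds_zero_nat
    have h2 := (hlim.const_mul (Real.exp β * M)).mul_const ‖(1:A)‖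
    rw [mul_zero, zero_mul] at h2
    exact h2
  have hdiff : Tendsto (fun n : ℕ =>
      (exp ((n:ℝ)⁻¹ • B) * exp ((n:ℝ)⁻¹ • C)) ^ n - exp (B + C)) atTop (𝓝 0) := by
    refine squeeze_zero_norm' ?_ h0
    filter_upwards [eventually_ge_atTop 1] with n hn
    exact key n hn
  have hfin := hdiff.add_const (exp (B + C))
  rw [zero_add] at hfin
  refine hfin.congr fun n => by abel

/-! ### Units given by exponentials -/

/-- `exp z` as a unit. -/
noncomputable def uexp (z : A) : Aˣ where
  val := exp z
  inv := exp (-z)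
  val_inv := by
    rw [← exp_add_of_commute ((Commute.refl z).neg_right)]
    simp
  inv_val := by
    rw [← exp_add_of_commute ((Commute.refl z).neg_left)]
    simp

@[simp] lemma uexp_val (z : A) : ((uexp z : Aˣ) : A) = exp z := rfl
@[simp] lemma uexp_inv_val (z : A) : (((uexp z)⁻¹ : Aˣ) : A) = exp (-z) := rfl

/-! ### The set of values of a subgroup of units -/

def US (K : Subgroup Aˣ) : Set A := (fun u : Aˣ => (u : A)) '' (K : Set Aˣ)

lemma US_one (K : Subgroup Aˣ) : (1 : A) ∈ US K := ⟨1, K.one_mem, rfl⟩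

lemma US_mul {K : Subgroup Aˣ} {a b : A} (ha : a ∈ US K) (hb : b ∈ US K) :
    a * b ∈ US K := by
  obtain ⟨u, hu, rfl⟩ := ha
  obtain ⟨v, hv, rfl⟩ := hb
  exact ⟨u * v, K.mul_mem hu hv, rfl⟩

lemma US_pow {K : Subgroup Aˣ} {a : A} (ha : a ∈ US K) (n : ℕ) : a ^ n ∈ US K := by
  induction n with
  | zero => simpa using US_one K
  | succ n ih => rw [pow_succ]; exact US_mul ih ha

lemma coe_inv_of_val_exp {k : Aˣ} {z : A} (hkv : (k : A) = exp z) :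
    ((k⁻¹ : Aˣ) : A) = exp (-z) := by
  have : k = uexp z := Units.ext (by rw [hkv]; rfl)
  rw [this]; rfl

/-! ### The Lie algebra as a set -/

def ksetS (K : Subgroup Aˣ) : Set A := {Y | ∀ r : ℝ, exp (r • Y) ∈ US K}

lemma mem_lie_iff {K : Subgroup Aˣ} {Y : A} : Y ∈ lieAlgebraOf K ↔ Y ∈ ksetS K := by
  constructor
  · intro h r
    obtain ⟨k, hk, hkv⟩ := h r
    exact ⟨k, hk, hkv⟩
  · intro h r
    obtain ⟨k, hk, hkv⟩ := h r
    exact ⟨k, hk, hkv⟩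

lemma ksetS_smul {K : Subgroup Aˣ} {Y : A} (c : ℝ) (hY : Y ∈ ksetS K) :
    c • Y ∈ ksetS K := fun r => by rw [smul_smul]; exact hY (r * c)

lemma ksetS_zero (K : Subgroup Aˣ) : (0 : A) ∈ ksetS K := fun r => by
  rw [smul_zero, exp_zero]; exact US_one K

lemma ksetS_closed {K : Subgroup Aˣ} (hS : IsClosed (US K)) : IsClosed (ksetS K) := by
  have h : ksetS K = ⋂ r : ℝ, (fun Y : A => exp (r • Y)) ⁻¹' (US K) := by
    ext Y; simp [ksetS, Set.mem_iInter]
  rw [h]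
  exact isClosed_iInter fun r =>
    hS.preimage (exp_continuous.comp (continuous_id.const_smul r))

lemma ksetS_add {K : Subgroup Aˣ} (hS : IsClosed (US K)) {B C : A}
    (hB : B ∈ ksetS K) (hC : C ∈ ksetS K) : B + C ∈ ksetS K := by
  intro r
  have h := trotter (r • B) (r • C)
  rw [← smul_add] at h
  refine hS.mem_of_tendsto h (Filter.Eventually.of_forall fun n => ?_)
  refine US_pow (US_mul ?_ ?_) n
  · rw [smul_smul]; exact hB _
  · rw [smul_smul]; exact hC _

lemma ksetS_neg {K : Subgroup Aˣ} {Y : A} (hY : Y ∈ ksetS K) : -Y ∈ ksetS K := by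
  have := ksetS_smul (-1 : ℝ) hY
  rwa [neg_one_smul] at this

/-! ### conjugation-invariance machinery -/

/-- `exp` commutes with a continuous linear multiplication-representation. -/
lemma exp_comm_hom (Φ : A →L[ℝ] (A →L[ℝ] A))
    (h : ∀ (z : A) (n : ℕ), (Φ z) ^ n = Φ (z ^ n)) (z : A) :
    exp (Φ z) = Φ (exp z) := by
  have e1 : exp (Φ z) = ∑' n : ℕ, (n.factorial⁻¹ : ℝ) • (Φ z) ^ n := by
    rw [exp_eq_tsum ℝ]
  have e2 : exp z = ∑' n : ℕ, (n.factorial⁻¹ : ℝ) • z ^ n := by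
    rw [exp_eq_tsum ℝ]
  rw [e1, e2, Φ.map_tsum (expSeries_summable' (𝕂 := ℝ) z)]
  congr 1
  ext n
  rw [h, map_smul]

lemma mul_pow_rep (z : A) (n : ℕ) :
    (ContinuousLinearMap.mul ℝ A z) ^ n = ContinuousLinearMap.mul ℝ A (z ^ n) := by
  induction n with
  | zero => ext w; simp
  | succ n ih =>
    ext w
    rw [pow_succ, ContinuousLinearMap.mul_apply, ih]
    simp [pow_succ, mul_assoc]

lemma smul_pow_CLM (u : ℝ) (T : A →L[ℝ] A) (n : ℕ) : (u • T) ^ n = u ^ n • T ^ n := by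
  induction n with
  | zero => simp
  | succ n ih =>
    rw [pow_succ, ih, pow_succ u n, pow_succ T n]
    ext z
    simp only [ContinuousLinearMap.mul_apply, ContinuousLinearMap.smul_apply, map_smul,
      smul_smul]
    rw [mul_comm]

lemma mul_flip_pow_rep (z : A) (n : ℕ) :
    ((ContinuousLinearMap.mul ℝ A).flip z) ^ n
      = (ContinuousLinearMap.mul ℝ A).flip (z ^ n) := by
  induction n with
  | zero => ext w; simp
  | succ n ih =>
    ext w
    rw [pow_succ, ContinuousLinearMap.mul_apply, ih]
    simp [ContinuousLinearMap.flip_apply, pow_succ', mul_assoc]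

/-- The key series identity: `exp(uX) Y exp(-uX)` is the sum of the iterated
commutator series, as a `HasSum`. -/
lemma hasSum_conj_series (X Y : A) (u : ℝ) :
    HasSum (fun n : ℕ =>
        ((n.factorial⁻¹ : ℝ) * u ^ n) •
          ((ContinuousLinearMap.mul ℝ A X - (ContinuousLinearMap.mul ℝ A).flip X) ^ n) Y)
      (exp (u • X) * Y * exp (-(u • X))) := by
  set L : A →L[ℝ] A := ContinuousLinearMap.mul ℝ A X with hL
  set R : A →L[ℝ] A := (ContinuousLinearMap.mul ℝ A).flip X with hR
  have hLR : Commute L R := by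
    ext z
    simp [hL, hR, ContinuousLinearMap.mul_apply, mul_assoc]
  have hexpL : exp (u • L) = ContinuousLinearMap.mul ℝ A (exp (u • X)) := by
    have h1 : u • L = ContinuousLinearMap.mul ℝ A (u • X) := by
      rw [hL, map_smul]
    rw [h1, exp_comm_hom _ mul_pow_rep]
  have hexpR : exp (-(u • R)) = (ContinuousLinearMap.mul ℝ A).flip (exp (-(u • X))) := by
    have h1 : -(u • R) = (ContinuousLinearMap.mul ℝ A).flip (-(u • X)) := by
      rw [hR, map_neg, map_smul]
    rw [h1, exp_comm_hom _ mul_flip_pow_rep]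
  have hsplit : exp (u • (L - R)) = exp (u • L) * exp (-(u • R)) := by
    have h1 : u • (L - R) = u • L + -(u • R) := by rw [smul_sub]; abel
    have hC2 : Commute (u • L) (-(u • R)) := by
      show (u • L) * (-(u • R)) = (-(u • R)) * (u • L)
      ext z
      simp only [ContinuousLinearMap.mul_apply, ContinuousLinearMap.neg_apply,
        ContinuousLinearMap.smul_apply, map_neg, map_smul, hL, hR,
        ContinuousLinearMap.flip_apply]
      simp [ContinuousLinearMap.mul_apply, mul_assoc, mul_smul_comm, smul_mul_assoc]
    rw [h1, exp_add_of_commute hC2]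
  have happly : (exp (u • (L - R))) Y = exp (u • X) * Y * exp (-(u • X)) := by
    rw [hsplit, ContinuousLinearMap.mul_apply, hexpL, hexpR]
    simp [ContinuousLinearMap.mul_apply, ContinuousLinearMap.flip_apply, mul_assoc]
  have h := exp_series_hasSum_exp' (𝕂 := ℝ) (u • (L - R))
  have h2 := h.mapL (ContinuousLinearMap.apply ℝ A Y)
  rw [show (ContinuousLinearMap.apply ℝ A Y) (exp (u • (L - R)))
      = (exp (u • (L - R))) Y from rfl, happly] at h2
  convert h2 using 2 with n
  case e'_3 => rfl
  show ((n.factorial⁻¹ : ℝ) * u ^ n) • ((L - R) ^ n) Y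
      = (ContinuousLinearMap.apply ℝ A Y) ((n.factorial⁻¹ : ℝ) • (u • (L - R)) ^ n)
  rw [smul_pow_CLM]
  show ((n.factorial⁻¹ : ℝ) * u ^ n) • ((L - R) ^ n) Y
      = ((n.factorial⁻¹ : ℝ) • (u ^ n • (L - R) ^ n)) Y
  rw [ContinuousLinearMap.smul_apply, ContinuousLinearMap.smul_apply, smul_smul]

/-! ### Bracket stability of the Lie algebra set -/

lemma bracket_mem {K : Subgroup Aˣ} (hS : IsClosed (US K)) (X : A)
    (hyp : ∀ k ∈ K, ((k : A) * X * ((k⁻¹ : Aˣ) : A) - X) ∈ ksetS K) :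
    ∀ W ∈ ksetS K, (X * W - W * X) ∈ ksetS K := by
  intro W hW
  suffices hXW : (W * X - X * W) ∈ ksetS K by
    have := ksetS_smul (-1) hXW
    rwa [neg_smul, one_smul, neg_sub] at this
  have hD : ∀ r : ℝ, (exp (r • W) * X * exp (-(r • W)) - X) ∈ ksetS K := by
    intro r
    obtain ⟨k, hk, hkv⟩ := hW r
    have hkv' : (k : A) = exp (r • W) := hkv
    have h2 := hyp k hk
    rw [hkv', coe_inv_of_val_exp hkv'] at h2
    exact h2
  set w := nuA W with hw
  set x := nuA X with hx
  set CW := w^2*x + (1+w)*x*(w^2*Real.exp w) + (w^2*Real.exp w)*x*(1+w)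
      + (w^2*Real.exp w)*x*(w^2*Real.exp w) with hCW
  have hw0 : 0 ≤ w := nuA_nonneg W
  have hx0 : 0 ≤ x := nuA_nonneg X
  have hCW0 : 0 ≤ CW := by rw [hCW]; positivity
  have hest : ∀ r : ℝ, |r| ≤ 1 →
      nuA (exp (r • W) * X * exp (-(r • W)) - X - r • (W * X - X * W))
        ≤ r ^ 2 * CW := by
    intro r hr
    set W' := r • W with hW'
    have hsm : r • (W * X - X * W) = W' * X - X * W' := by
      rw [smul_sub, hW', smul_mul_assoc, mul_smul_comm]
    set E₁ := exp W' - 1 - W' with hE1def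
    set E₂ := exp (-W') - 1 - (-W') with hE2def
    have hexp1 : exp W' = 1 + W' + E₁ := by rw [hE1def]; abel
    have hexp2 : exp (-W') = 1 - W' + E₂ := by rw [hE2def]; abel
    have hnegW' : -(r • W) = -W' := by rw [hW']
    have key : exp W' * X * exp (-W') - X - (W' * X - X * W')
        = -(W' * X * W') + (1 + W') * X * E₂ + E₁ * X * (1 - W') + E₁ * X * E₂ := by
      rw [hexp1, hexp2]
      noncomm_ring
    -- norms
    have hW'n : nuA W' ≤ |r| * w := by rw [hW', nuA_smul]
    have hW'w : nuA W' ≤ w := by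
      refine hW'n.trans ?_
      nlinarith [abs_nonneg r]
    have hr2 : r ^ 2 ≤ 1 := by nlinarith [sq_abs r, abs_nonneg r]
    have hE1b : nuA E₁ ≤ r ^ 2 * (w ^ 2 * Real.exp w) := by
      refine (nuA_exp_sub_one_sub W').trans ?_
      have e1 : nuA W' ^ 2 ≤ (|r| * w) ^ 2 := pow_le_pow_left₀ (nuA_nonneg _) hW'n 2
      have e2 : (|r| * w) ^ 2 = r ^ 2 * w ^ 2 := by rw [mul_pow, sq_abs]
      have e3 : Real.exp (nuA W') ≤ Real.exp w := Real.exp_le_exp.mpr hW'w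
      nlinarith [nuA_nonneg W', Real.exp_pos (nuA W'), Real.exp_pos w, sq_nonneg (nuA W')]
    have hE2b : nuA E₂ ≤ r ^ 2 * (w ^ 2 * Real.exp w) := by
      have h0 : nuA (-W') = nuA W' := nuA_neg W'
      refine (nuA_exp_sub_one_sub (-W')).trans ?_
      rw [h0]
      have e1 : nuA W' ^ 2 ≤ (|r| * w) ^ 2 := pow_le_pow_left₀ (nuA_nonneg _) hW'n 2
      have e2 : (|r| * w) ^ 2 = r ^ 2 * w ^ 2 := by rw [mul_pow, sq_abs]
      have e3 : Real.exp (nuA W') ≤ Real.exp w := Real.exp_le_exp.mpr hW'w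
      nlinarith [nuA_nonneg W', Real.exp_pos (nuA W'), Real.exp_pos w, sq_nonneg (nuA W')]
    have hE2w : nuA E₂ ≤ w ^ 2 * Real.exp w := by
      refine hE2b.trans ?_
      have := mul_le_mul_of_nonneg_right hr2 (by positivity : (0:ℝ) ≤ w^2*Real.exp w)
      linarith
    have h1W : nuA (1 + W') ≤ 1 + w := by
      refine (nuA_add _ _).trans ?_
      have := nuA_one (A := A); linarith
    have h1W' : nuA (1 - W') ≤ 1 + w := by
      refine (nuA_sub_le _ _).trans ?_
      have := nuA_one (A := A); linarith
    -- four term bounds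
    have t1 : nuA (-(W' * X * W')) ≤ r ^ 2 * (w ^ 2 * x) := by
      rw [nuA_neg]
      refine ((nuA_mul _ _).trans ?_)
      have hab : nuA (W' * X) ≤ nuA W' * x := nuA_mul W' X
      have : nuA (W' * X) * nuA W' ≤ (nuA W' * x) * nuA W' :=
        mul_le_mul_of_nonneg_right hab (nuA_nonneg _)
      have h2 : (nuA W' * x) * nuA W' ≤ ((|r| * w) * x) * (|r| * w) := by
        refine mul_le_mul (mul_le_mul_of_nonneg_right hW'n hx0) hW'n (nuA_nonneg _) ?_
        positivity
      have h3 : ((|r| * w) * x) * (|r| * w) = r ^ 2 * (w ^ 2 * x) := by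
        rw [← sq_abs r]; ring
      linarith
    have t2 : nuA ((1 + W') * X * E₂) ≤ r ^ 2 * ((1 + w) * x * (w ^ 2 * Real.exp w)) := by
      refine ((nuA_mul _ _).trans ?_)
      have hab : nuA ((1 + W') * X) ≤ (1 + w) * x := by
        refine (nuA_mul _ _).trans ?_
        exact mul_le_mul h1W le_rfl hx0 (by linarith)
      calc nuA ((1 + W') * X) * nuA E₂ ≤ ((1 + w) * x) * (r ^ 2 * (w ^ 2 * Real.exp w)) := by
            refine mul_le_mul hab hE2b (nuA_nonneg _) (by positivity)
        _ = r ^ 2 * ((1 + w) * x * (w ^ 2 * Real.exp w)) := by ring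
    have t3 : nuA (E₁ * X * (1 - W')) ≤ r ^ 2 * ((w ^ 2 * Real.exp w) * x * (1 + w)) := by
      refine ((nuA_mul _ _).trans ?_)
      have hab : nuA (E₁ * X) ≤ r ^ 2 * (w ^ 2 * Real.exp w) * x := by
        refine (nuA_mul _ _).trans ?_
        exact mul_le_mul_of_nonneg_right hE1b hx0
      calc nuA (E₁ * X) * nuA (1 - W')
          ≤ (r ^ 2 * (w ^ 2 * Real.exp w) * x) * (1 + w) := by
            refine mul_le_mul hab h1W' (nuA_nonneg _) (by positivity)
        _ = r ^ 2 * ((w ^ 2 * Real.exp w) * x * (1 + w)) := by ring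
    have t4 : nuA (E₁ * X * E₂) ≤ r ^ 2 * ((w ^ 2 * Real.exp w) * x * (w ^ 2 * Real.exp w)) := by
      refine ((nuA_mul _ _).trans ?_)
      have hab : nuA (E₁ * X) ≤ r ^ 2 * (w ^ 2 * Real.exp w) * x := by
        refine (nuA_mul _ _).trans ?_
        exact mul_le_mul_of_nonneg_right hE1b hx0
      calc nuA (E₁ * X) * nuA E₂
          ≤ (r ^ 2 * (w ^ 2 * Real.exp w) * x) * (w ^ 2 * Real.exp w) := by
            refine mul_le_mul hab hE2w (nuA_nonneg _) (by positivity)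
        _ = r ^ 2 * ((w ^ 2 * Real.exp w) * x * (w ^ 2 * Real.exp w)) := by ring
    rw [hsm, hnegW', key, hCW]
    calc nuA (-(W' * X * W') + (1 + W') * X * E₂ + E₁ * X * (1 - W') + E₁ * X * E₂)
        ≤ nuA (-(W' * X * W') + (1 + W') * X * E₂ + E₁ * X * (1 - W')) + nuA (E₁ * X * E₂) :=
          nuA_add _ _
      _ ≤ nuA (-(W' * X * W') + (1 + W') * X * E₂) + nuA (E₁ * X * (1 - W'))
          + nuA (E₁ * X * E₂) := by
          have := nuA_add (-(W' * X * W') + (1 + W') * X * E₂) (E₁ * X * (1 - W')); linarith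
      _ ≤ nuA (-(W' * X * W')) + nuA ((1 + W') * X * E₂) + nuA (E₁ * X * (1 - W'))
          + nuA (E₁ * X * E₂) := by
          have := nuA_add (-(W' * X * W')) ((1 + W') * X * E₂); linarith
      _ ≤ r ^ 2 * (w^2*x + (1+w)*x*(w^2*Real.exp w) + (w^2*Real.exp w)*x*(1+w)
          + (w^2*Real.exp w)*x*(w^2*Real.exp w)) := by linarith
  -- pass to the limit
  have hbnd : ∀ q : ℕ,
      ‖((q : ℝ) + 1) • (exp ((((q:ℝ)+1)⁻¹) • W) * X * exp (-((((q:ℝ)+1)⁻¹) • W)) - X)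
        - (W * X - X * W)‖ ≤ (((q:ℝ)+1)⁻¹ * CW) * ‖(1:A)‖ := by
    intro q
    set r : ℝ := ((q:ℝ)+1)⁻¹ with hrdef
    have hq0 : (0:ℝ) < (q:ℝ) + 1 := by positivity
    have hr0 : 0 < r := by rw [hrdef]; positivity
    have hr1 : |r| ≤ 1 := by
      rw [abs_of_pos hr0, hrdef]
      rw [inv_le_one₀ hq0]
      simp
    have hcancel : ((q:ℝ)+1) • (r • (W * X - X * W)) = W * X - X * W := by
      rw [smul_smul, hrdef, mul_inv_cancel₀ (ne_of_gt hq0), one_smul]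
    have hrw : ((q : ℝ) + 1) • (exp (r • W) * X * exp (-(r • W)) - X) - (W * X - X * W)
        = ((q:ℝ)+1) • ((exp (r • W) * X * exp (-(r • W)) - X) - r • (W * X - X * W)) := by
      rw [smul_sub ((q:ℝ)+1) (exp (r • W) * X * exp (-(r • W)) - X) (r • (W * X - X * W)),
        hcancel]
    rw [hrw]
    refine (norm_le_nuA _).trans ?_
    refine mul_le_mul_of_nonneg_right ?_ (norm_nonneg _)
    rw [nuA_smul]
    have := hest r hr1
    calc |((q:ℝ)+1)| * nuA ((exp (r • W) * X * exp (-(r • W)) - X) - r • (W * X - X * W))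
        ≤ (((q:ℝ)+1)) * (r ^ 2 * CW) := by
          rw [abs_of_pos hq0]
          exact mul_le_mul_of_nonneg_left this hq0.le
      _ = (((q:ℝ)+1) * r) * (r * CW) := by ring
      _ = r * CW := by
          rw [hrdef, mul_inv_cancel₀ (ne_of_gt hq0), one_mul]
  have h0 : Tendsto (fun q : ℕ => (((q:ℝ)+1)⁻¹ * CW) * ‖(1:A)‖) atTop (𝓝 0) := by
    have h1 : Tendsto (fun q : ℕ => ((q:ℝ)+1)⁻¹) atTop (𝓝 0) :=
      tendsto_one_div_add_atTop_nhds_zero_nat.congr (by intro q; rw [one_div])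
    have h2 := (h1.mul_const CW).mul_const ‖(1:A)‖
    rw [zero_mul, zero_mul] at h2
    exact h2
  have hdiff : Tendsto (fun q : ℕ =>
      ((q : ℝ) + 1) • (exp ((((q:ℝ)+1)⁻¹) • W) * X * exp (-((((q:ℝ)+1)⁻¹) • W)) - X)
        - (W * X - X * W)) atTop (𝓝 0) :=
    squeeze_zero_norm hbnd h0
  have hfin := hdiff.add_const (W * X - X * W)
  rw [zero_add] at hfin
  have htt : Tendsto (fun q : ℕ =>
      ((q : ℝ) + 1) • (exp ((((q:ℝ)+1)⁻¹) • W) * X * exp (-((((q:ℝ)+1)⁻¹) • W)) - X))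
      atTop (𝓝 (W * X - X * W)) := hfin.congr fun q => by abel
  exact (ksetS_closed hS).mem_of_tendsto htt
    (Filter.Eventually.of_forall fun q => ksetS_smul _ (hD _))

/-! ### Adjoint invariance -/

lemma adj_mem {K : Subgroup Aˣ} (hS : IsClosed (US K)) (X : A)
    (hyp : ∀ k ∈ K, ((k : A) * X * ((k⁻¹ : Aˣ) : A) - X) ∈ ksetS K)
    (Y : A) (hY : Y ∈ ksetS K) (u : ℝ) :
    exp (u • X) * Y * exp (-(u • X)) ∈ ksetS K := by
  set T := ContinuousLinearMap.mul ℝ A X - (ContinuousLinearMap.mul ℝ A).flip X with hT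
  have hTapp : ∀ Z : A, T Z = X * Z - Z * X := fun Z => by
    rw [hT]
    simp [ContinuousLinearMap.flip_apply]
  have hTmem : ∀ n : ℕ, (T ^ n) Y ∈ ksetS K := by
    intro n
    induction n with
    | zero => simpa using hY
    | succ n ih =>
      rw [pow_succ', ContinuousLinearMap.mul_apply, hTapp]
      exact bracket_mem hS X hyp _ ih
  have hsum := hasSum_conj_series X Y u
  rw [← hT] at hsum
  have hpart : ∀ m : ℕ,
      (∑ i ∈ Finset.range m, ((i.factorial⁻¹ : ℝ) * u ^ i) • ((T ^ i) Y)) ∈ ksetS K := by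
    intro m
    induction m with
    | zero => simpa using ksetS_zero K
    | succ m ih =>
      rw [Finset.sum_range_succ]
      exact ksetS_add hS ih (ksetS_smul _ (hTmem m))
  exact (ksetS_closed hS).mem_of_tendsto hsum.tendsto_sum_nat
    (Filter.Eventually.of_forall hpart)

/-! ### Conjugation by `exp (t • X)` preserves `K` -/

lemma conj_exp_mem {K : Subgroup Aˣ} (hS : IsClosed (US K)) (X : A)
    (hyp : ∀ k ∈ K, ((k : A) * X * ((k⁻¹ : Aˣ) : A) - X) ∈ ksetS K)
    (t : ℝ) (k : Aˣ) (hk : k ∈ K) :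
    exp (t • X) * (k : A) * exp (-(t • X)) ∈ US K := by
  set Y := (k : A) * X * ((k⁻¹ : Aˣ) : A) - X with hYdef
  have hY : Y ∈ ksetS K := hyp k hk
  set x := nuA X with hx
  have hx0 : 0 ≤ x := nuA_nonneg X
  set Mz := Real.exp (2 * |t| * x) * nuA Y with hMzdef
  have hMz0 : 0 ≤ Mz := mul_nonneg (Real.exp_pos _).le (nuA_nonneg Y)
  obtain ⟨M, hM0, hM⟩ := nuA_exp_mul_exp_sub (A := A) x (x + Mz) hx0 (by linarith)
  set Mp := Real.exp (2 * |t| * x) * (nuA ((k : A)) * nuA (((k⁻¹ : Aˣ) : A))) with hMpdef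
  have hMp0 : 0 ≤ Mp :=
    mul_nonneg (Real.exp_pos _).le (mul_nonneg (nuA_nonneg _) (nuA_nonneg _))
  set CC := t ^ 2 * (M * Mp) * Real.exp (|t| * Mz) with hCCdef
  have hCC0 : 0 ≤ CC := by
    refine mul_nonneg (mul_nonneg (sq_nonneg t) (mul_nonneg hM0 hMp0)) (Real.exp_pos _).le
  -- commuting exponentials of multiples of X
  have hcomm : ∀ a b : ℝ, Commute (a • X) (b • X) := by
    intro a b
    show (a • X) * (b • X) = (b • X) * (a • X)
    rw [smul_mul_assoc, mul_smul_comm, smul_smul, smul_mul_assoc, mul_smul_comm, smul_smul,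
      mul_comm a b]
  have hXadd : ∀ a b : ℝ, exp ((a + b) • X) = exp (a • X) * exp (b • X) := by
    intro a b
    rw [add_smul, exp_add_of_commute (hcomm a b)]
  -- units U a = exp (a • X)
  set U : ℝ → Aˣ := fun a => uexp (a • X) with hUdef
  have hUval : ∀ a : ℝ, ((U a : Aˣ) : A) = exp (a • X) := fun a => rfl
  have hUinv : ∀ a : ℝ, (((U a)⁻¹ : Aˣ) : A) = exp (-(a • X)) := fun a => rfl
  have hUmul : ∀ a b : ℝ, U (a + b) = U a * U b := by
    intro a b
    refine Units.ext ?_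
    show exp ((a + b) • X) = exp (a • X) * exp (b • X)
    exact hXadd a b
  have hUX : ∀ a : ℝ, ((U a : Aˣ) : A) * X * (((U a)⁻¹ : Aˣ) : A) = X := by
    intro a
    have hcX : Commute X (exp (a • X)) :=
      (((Commute.refl X).smul_right a).exp_right)
    rw [hUval, hUinv, ← hcX.eq, mul_assoc]
    have : exp (a • X) * exp (-(a • X)) = 1 := by
      have := Units.mul_inv (U a)
      rwa [hUval, hUinv] at this
    rw [this, mul_one]
  -- bound on conjugated elements
  have hPb : ∀ a : ℝ, |a| ≤ |t| →
      nuA (exp (a • X) * (k : A) * exp (-(a • X)) * ((k⁻¹ : Aˣ) : A)) ≤ Mp := by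
    intro a ha
    have hea : nuA (exp (a • X)) ≤ Real.exp (|t| * x) := by
      refine (nuA_exp_le _).trans (Real.exp_le_exp.mpr ?_)
      rw [nuA_smul]
      exact mul_le_mul_of_nonneg_right ha hx0
    have hea' : nuA (exp (-(a • X))) ≤ Real.exp (|t| * x) := by
      refine (nuA_exp_le _).trans (Real.exp_le_exp.mpr ?_)
      rw [nuA_neg, nuA_smul]
      exact mul_le_mul_of_nonneg_right ha hx0
    have step1 : nuA (exp (a • X) * (k : A)) ≤ Real.exp (|t| * x) * nuA ((k : A)) :=
      (nuA_mul _ _).trans (mul_le_mul_of_nonneg_right hea (nuA_nonneg _))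
    have step2 : nuA (exp (a • X) * (k : A) * exp (-(a • X)))
        ≤ Real.exp (|t| * x) * nuA ((k : A)) * Real.exp (|t| * x) := by
      refine (nuA_mul _ _).trans ?_
      exact mul_le_mul step1 hea' (nuA_nonneg _)
        (mul_nonneg (Real.exp_pos _).le (nuA_nonneg _))
    have step3 := (nuA_mul (exp (a • X) * (k : A) * exp (-(a • X))) (((k⁻¹ : Aˣ) : A))).trans
      (mul_le_mul step2 le_rfl (nuA_nonneg _)
        (mul_nonneg (mul_nonneg (Real.exp_pos _).le (nuA_nonneg _)) (Real.exp_pos _).le))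
    refine step3.trans (le_of_eq ?_)
    rw [hMpdef]
    calc Real.exp (|t| * x) * nuA ((k : A)) * Real.exp (|t| * x) * nuA (((k⁻¹ : Aˣ) : A))
        = Real.exp (|t| * x + |t| * x) * (nuA ((k : A)) * nuA (((k⁻¹ : Aˣ) : A))) := by
          rw [Real.exp_add]; ring
      _ = Real.exp (2 * |t| * x) * (nuA ((k : A)) * nuA (((k⁻¹ : Aˣ) : A))) := by
          rw [show |t| * x + |t| * x = 2 * |t| * x by ring]
  -- main quantitative approximation
  have main : ∀ n : ℕ, 1 ≤ n → |t| ≤ (n : ℝ) → ∃ q ∈ US K,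
      nuA (exp (t • X) * (k : A) * exp (-(t • X)) * ((k⁻¹ : Aˣ) : A) - q) ≤ CC / n := by
    intro n hn1 hnt
    have hn0 : (0 : ℝ) < n := by exact_mod_cast hn1
    set s : ℝ := t / n with hsdef
    have hst : |s| = |t| / n := by rw [hsdef, abs_div, abs_of_pos hn0]
    have hs1 : |s| ≤ 1 := by rw [hst, div_le_one hn0]; exact hnt
    set E := Real.exp (|s| * Mz) with hEdef
    have hE1 : 1 ≤ E := Real.one_le_exp (by positivity)
    have hE0 : 0 ≤ E := by linarith
    -- the inductive approximation
    have H : ∀ m : ℕ, m ≤ n → ∃ q ∈ US K,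
        nuA (exp (((m : ℝ) * s) • X) * (k : A) * exp (-(((m : ℝ) * s) • X))
          * ((k⁻¹ : Aˣ) : A) - q) ≤ (m : ℝ) * (s ^ 2 * (M * Mp)) * E ^ m := by
      intro m
      induction m with
      | zero =>
        intro _
        refine ⟨1, US_one K, ?_⟩
        have h1 : ((0 : ℕ) : ℝ) * s = 0 := by norm_num
        rw [h1, zero_smul, neg_zero, exp_zero, one_mul, mul_one, Units.mul_inv]
        simp [nuA_zero]
      | succ m ih =>
        intro hm1
        obtain ⟨q, hqS, hqb⟩ := ih (le_trans (Nat.le_succ m) hm1)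
        have hmn : (m : ℝ) ≤ (n : ℝ) := by exact_mod_cast le_trans (Nat.le_succ m) hm1
        have hm0 : (0 : ℝ) ≤ (m : ℝ) := Nat.cast_nonneg m
        have hms : |(m : ℝ) * s| ≤ |t| := by
          rw [abs_mul, abs_of_nonneg hm0, hst]
          calc (m : ℝ) * (|t| / n) ≤ (n : ℝ) * (|t| / n) :=
            mul_le_mul_of_nonneg_right hmn (by positivity)
          _ = |t| := by rw [mul_comm, div_mul_cancel₀ _ (ne_of_gt hn0)]
        -- the conjugated element Z
        set Z := exp (((m : ℝ) * s) • X) * Y * exp (-(((m : ℝ) * s) • X)) with hZdef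
        have hZk : Z ∈ ksetS K := adj_mem hS X hyp Y hY ((m : ℝ) * s)
        have hZb : nuA Z ≤ Mz := by
          have h1 : nuA (exp (((m : ℝ) * s) • X)) ≤ Real.exp (|t| * x) := by
            refine (nuA_exp_le _).trans (Real.exp_le_exp.mpr ?_)
            rw [nuA_smul]
            exact mul_le_mul_of_nonneg_right hms hx0
          have h2 : nuA (exp (-(((m : ℝ) * s) • X))) ≤ Real.exp (|t| * x) := by
            refine (nuA_exp_le _).trans (Real.exp_le_exp.mpr ?_)
            rw [nuA_neg, nuA_smul]
            exact mul_le_mul_of_nonneg_right hms hx0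
          have step1 : nuA (exp (((m : ℝ) * s) • X) * Y)
              ≤ Real.exp (|t| * x) * nuA Y :=
            (nuA_mul _ _).trans (mul_le_mul_of_nonneg_right h1 (nuA_nonneg _))
          have step2 := (nuA_mul (exp (((m : ℝ) * s) • X) * Y)
            (exp (-(((m : ℝ) * s) • X)))).trans
            (mul_le_mul step1 h2 (nuA_nonneg _)
              (mul_nonneg (Real.exp_pos _).le (nuA_nonneg _)))
          refine step2.trans (le_of_eq ?_)
          rw [hMzdef]
          calc Real.exp (|t| * x) * nuA Y * Real.exp (|t| * x)
              = Real.exp (|t| * x) * Real.exp (|t| * x) * nuA Y := by ring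
            _ = Real.exp (2 * |t| * x) * nuA Y := by
                rw [← Real.exp_add, show |t| * x + |t| * x = 2 * |t| * x by ring]
        -- conjugation identities
        have hXY : X + Y = (k : A) * X * ((k⁻¹ : Aˣ) : A) := by rw [hYdef]; abel
        have hXZ : X + Z = ((U ((m : ℝ) * s) : Aˣ) : A) * (X + Y)
            * (((U ((m : ℝ) * s))⁻¹ : Aˣ) : A) := by
          rw [mul_add, add_mul]
          rw [hUX ((m : ℝ) * s)]
          rw [hZdef, hUval, hUinv]
        have cB : s • (-(X + Z)) = ((U ((m : ℝ) * s) : Aˣ) : A) * (s • (-(X + Y)))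
            * (((U ((m : ℝ) * s))⁻¹ : Aˣ) : A) := by
          rw [hXZ]
          simp only [smul_neg, mul_neg, neg_mul, mul_smul_comm, smul_mul_assoc]
        have cD : s • (-(X + Y)) = (k : A) * (-(s • X)) * ((k⁻¹ : Aˣ) : A) := by
          rw [hXY]
          simp only [smul_neg, mul_neg, neg_mul, mul_smul_comm, smul_mul_assoc]
        have cC : exp (s • (-(X + Z)))
            = ((U ((m : ℝ) * s) : Aˣ) : A)
              * ((k : A) * exp (-(s • X)) * ((k⁻¹ : Aˣ) : A))
              * (((U ((m : ℝ) * s))⁻¹ : Aˣ) : A) := by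
          rw [cB, exp_units_conj, cD, exp_units_conj]
        -- the unit V
        set V : Aˣ := U ((m : ℝ) * s) * (k * (U s)⁻¹ * k⁻¹) * (U ((m : ℝ) * s))⁻¹ with hVdef
        have hVcoe : ((V : Aˣ) : A) = exp (s • (-(X + Z))) := by
          rw [cC, hVdef]
          push_cast
          rw [hUinv s]
        -- the unit-level telescoping identity
        have hc : Commute (U s) (U ((m : ℝ) * s)) := by
          show U s * U ((m : ℝ) * s) = U ((m : ℝ) * s) * U s
          rw [← hUmul, ← hUmul, add_comm]
        have h1 : U (((m : ℝ) + 1) * s) = U s * U ((m : ℝ) * s) := by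
          rw [← hUmul]
          congr 1
          ring
        have I1u : U (((m : ℝ) + 1) * s) * k * (U (((m : ℝ) + 1) * s))⁻¹ * k⁻¹
            = (U s * V) * (U ((m : ℝ) * s) * k * (U ((m : ℝ) * s))⁻¹ * k⁻¹) := by
          rw [h1, mul_inv_rev]
          rw [(hc.inv_left.inv_right).symm.eq]
          rw [hVdef]
          group
        -- pass to values in A
        have key : exp ((((m : ℝ) + 1) * s) • X) * (k : A)
              * exp (-((((m : ℝ) + 1) * s) • X)) * ((k⁻¹ : Aˣ) : A)
            = (exp (s • X) * exp (s • (-(X + Z))))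
              * (exp (((m : ℝ) * s) • X) * (k : A) * exp (-(((m : ℝ) * s) • X))
                * ((k⁻¹ : Aˣ) : A)) := by
          have := congrArg (fun u : Aˣ => (u : A)) I1u
          simp only [Units.val_mul] at this
          rw [hVcoe] at this
          rw [hUval, hUval, hUval, hUinv, hUinv] at this
          exact this
        -- the approximating element
        set e := exp (s • (X + -(X + Z))) with hedef
        have hXnegZ : X + -(X + Z) = -Z := by abel
        have heS : e ∈ US K := by
          rw [hedef, hXnegZ, smul_neg, ← neg_smul]
          exact hZk (-s)
        have heb : nuA e ≤ E := by
          rw [hedef, hXnegZ, hEdef]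
          refine (nuA_exp_le _).trans (Real.exp_le_exp.mpr ?_)
          rw [nuA_smul, nuA_neg]
          exact mul_le_mul_of_nonneg_left hZb (abs_nonneg s)
        -- error bound on one factor
        have hFe : nuA (exp (s • X) * exp (s • (-(X + Z))) - e) ≤ s ^ 2 * M := by
          rw [hedef]
          refine hM X (-(X + Z)) le_rfl ?_ s hs1
          rw [nuA_neg]
          refine (nuA_add _ _).trans ?_
          have := nuA_nonneg Z
          linarith [hZb]
        -- previous conjugate bound
        have hPmb : nuA (exp (((m : ℝ) * s) • X) * (k : A) * exp (-(((m : ℝ) * s) • X))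
            * ((k⁻¹ : Aˣ) : A)) ≤ Mp := hPb ((m : ℝ) * s) hms
        -- assemble
        refine ⟨e * q, US_mul heS hqS, ?_⟩
        have hsplit : exp ((((m : ℝ) + 1) * s) • X) * (k : A)
              * exp (-((((m : ℝ) + 1) * s) • X)) * ((k⁻¹ : Aˣ) : A) - e * q
            = (exp (s • X) * exp (s • (-(X + Z))) - e)
                * (exp (((m : ℝ) * s) • X) * (k : A) * exp (-(((m : ℝ) * s) • X))
                  * ((k⁻¹ : Aˣ) : A))
              + e * (exp (((m : ℝ) * s) • X) * (k : A) * exp (-(((m : ℝ) * s) • X))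
                  * ((k⁻¹ : Aˣ) : A) - q) := by
          rw [key]
          noncomm_ring
        have hb1 : nuA ((exp (s • X) * exp (s • (-(X + Z))) - e)
            * (exp (((m : ℝ) * s) • X) * (k : A) * exp (-(((m : ℝ) * s) • X))
              * ((k⁻¹ : Aˣ) : A))) ≤ (s ^ 2 * M) * Mp := by
          refine (nuA_mul _ _).trans ?_
          exact mul_le_mul hFe hPmb (nuA_nonneg _) (by positivity)
        have hb2 : nuA (e * (exp (((m : ℝ) * s) • X) * (k : A)
              * exp (-(((m : ℝ) * s) • X)) * ((k⁻¹ : Aˣ) : A) - q))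
            ≤ E * ((m : ℝ) * (s ^ 2 * (M * Mp)) * E ^ m) := by
          refine (nuA_mul _ _).trans ?_
          exact mul_le_mul heb hqb (nuA_nonneg _) hE0
        have hEm1 : (1 : ℝ) ≤ E ^ (m + 1) := one_le_pow₀ hE1
        have harith : (s ^ 2 * M) * Mp + E * ((m : ℝ) * (s ^ 2 * (M * Mp)) * E ^ m)
            ≤ ((m : ℝ) + 1) * (s ^ 2 * (M * Mp)) * E ^ (m + 1) := by
          have e1 : E * ((m : ℝ) * (s ^ 2 * (M * Mp)) * E ^ m)
              = (m : ℝ) * (s ^ 2 * (M * Mp)) * E ^ (m + 1) := by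
            rw [pow_succ]; ring
          have e2 : (s ^ 2 * M) * Mp ≤ (s ^ 2 * (M * Mp)) * E ^ (m + 1) := by
            have h0 : (0 : ℝ) ≤ s ^ 2 * (M * Mp) := by positivity
            calc (s ^ 2 * M) * Mp = (s ^ 2 * (M * Mp)) * 1 := by ring
              _ ≤ (s ^ 2 * (M * Mp)) * E ^ (m + 1) :=
                mul_le_mul_of_nonneg_left hEm1 h0
          rw [e1]
          have e3 : ((m : ℝ) + 1) * (s ^ 2 * (M * Mp)) * E ^ (m + 1)
              = (m : ℝ) * (s ^ 2 * (M * Mp)) * E ^ (m + 1)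
                + (s ^ 2 * (M * Mp)) * E ^ (m + 1) := by ring
          linarith
        push_cast
        rw [hsplit]
        refine (nuA_add _ _).trans ?_
        linarith [hb1, hb2, harith]
    -- instantiate at m = n
    obtain ⟨q, hqS, hqb⟩ := H n le_rfl
    refine ⟨q, hqS, ?_⟩
    have hns : (n : ℝ) * s = t := by
      rw [hsdef]; field_simp
    rw [hns] at hqb
    refine hqb.trans ?_
    have hEn : E ^ n = Real.exp (|t| * Mz) := by
      rw [hEdef, ← Real.exp_nat_mul]
      congr 1
      rw [hst]
      have hne : (n : ℝ) ≠ 0 := ne_of_gt hn0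
      field_simp
    rw [hEn]
    have heq : (n : ℝ) * (s ^ 2 * (M * Mp)) * Real.exp (|t| * Mz) = CC / n := by
      rw [hCCdef, hsdef, div_pow]
      field_simp
    exact le_of_eq heq
  -- conclude by closedness
  have hPc : exp (t • X) * (k : A) * exp (-(t • X)) * ((k⁻¹ : Aˣ) : A) ∈ US K := by
    have hcl : exp (t • X) * (k : A) * exp (-(t • X)) * ((k⁻¹ : Aˣ) : A)
        ∈ closure (US K) := by
      rw [Metric.mem_closure_iff]
      intro ε hε
      obtain ⟨n, hn⟩ := exists_nat_gt (max (max 1 |t|) (CC * ‖(1 : A)‖ / ε))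
      have hn1 : 1 ≤ n := by
        have : (1 : ℝ) ≤ max (max 1 |t|) (CC * ‖(1 : A)‖ / ε) :=
          le_trans (le_max_left _ _) (le_max_left _ _)
        exact_mod_cast this.trans hn.le
      have hnt : |t| ≤ (n : ℝ) :=
        le_trans (le_trans (le_max_right _ _) (le_max_left _ _)) hn.le
      have hnC : CC * ‖(1 : A)‖ / ε < n := lt_of_le_of_lt (le_max_right _ _) hn
      obtain ⟨q, hqS, hqb⟩ := main n hn1 hnt
      refine ⟨q, hqS, ?_⟩
      rw [dist_eq_norm]
      have hb : ‖exp (t • X) * (k : A) * exp (-(t • X)) * ((k⁻¹ : Aˣ) : A) - q‖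
          ≤ (CC / n) * ‖(1 : A)‖ :=
        (norm_le_nuA _).trans (mul_le_mul_of_nonneg_right hqb (norm_nonneg _))
      refine lt_of_le_of_lt hb ?_
      have hn0 : (0 : ℝ) < n := by exact_mod_cast hn1
      rw [div_mul_eq_mul_div, div_lt_iff₀ hn0]
      calc CC * ‖(1 : A)‖ = (CC * ‖(1 : A)‖ / ε) * ε := by field_simp
        _ < n * ε := by
          exact mul_lt_mul_of_pos_right hnC hε
        _ = ε * n := by ring
    rwa [hS.closure_eq] at hcl
  have hfin := US_mul hPc (⟨k, hk, rfl⟩ : (k : A) ∈ US K)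
  rwa [mul_assoc, Units.inv_mul, mul_one] at hfin


end Aux

/-- **The fixed points of the adjoint action on `𝔤/𝔨` are `𝔫_G(K)/𝔨`.**  Let `G` be a
connected (Banach) Lie group, realized as a closed connected subgroup of the group of units
of a Banach algebra, and let `K ≤ G` be a compact subgroup with Lie algebras `𝔤`, `𝔨`.
Then `(𝔤/𝔨)^K = 𝔫_G(K)/𝔨`, where `𝔫_G(K)` is the Lie algebra of the normalizer
`N_G(K) = {g ∈ G | g K g⁻¹ = K}`; equivalently, for `X ∈ 𝔤`, one has
`Ad_k X − X ∈ 𝔨` for all `k ∈ K` if and only if `X ∈ 𝔫_G(K)`. -/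
theorem fixed_points_adjoint_quotient_eq_normalizer
    {A : Type*} [NormedRing A] [NormedAlgebra ℝ A] [CompleteSpace A]
    (G K : Subgroup Aˣ) (hKG : K ≤ G)
    (hGclosed : IsClosed ((fun u : Aˣ => (u : A)) '' (G : Set Aˣ)))
    (hGconn : IsConnected ((fun u : Aˣ => (u : A)) '' (G : Set Aˣ)))
    (hKcompact : IsCompact ((fun u : Aˣ => (u : A)) '' (K : Set Aˣ)))
    (X : A) (hX : X ∈ lieAlgebraOf G) :
    (∀ k ∈ K, (k : A) * X * ((k⁻¹ : Aˣ) : A) - X ∈ lieAlgebraOf K) ↔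
      X ∈ lieAlgebraOf (G ⊓ Subgroup.normalizer K) := by
  have hS : IsClosed (US K) := hKcompact.isClosed
  constructor
  · -- fixed points are in the normalizer's Lie algebra
    intro hfix
    have hyp : ∀ k ∈ K, ((k : A) * X * ((k⁻¹ : Aˣ) : A) - X) ∈ ksetS K := fun k hk =>
      mem_lie_iff.mp (hfix k hk)
    intro t
    obtain ⟨g, hgG, hgv⟩ := hX t
    refine ⟨g, Subgroup.mem_inf.mpr ⟨hgG, ?_⟩, hgv⟩
    have hginv : ((g⁻¹ : Aˣ) : A) = exp (-(t • X)) := coe_inv_of_val_exp hgv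
    rw [Subgroup.mem_normalizer_iff]
    intro h
    constructor
    · intro hh
      obtain ⟨k', hk', hk'v⟩ := conj_exp_mem hS X hyp t h hh
      have hk'v' : (k' : A) = exp (t • X) * (h : A) * exp (-(t • X)) := hk'v
      have heq : g * h * g⁻¹ = k' := by
        apply Units.ext
        rw [Units.val_mul, Units.val_mul, hgv, hginv, hk'v']
      rw [heq]; exact hk'
    · intro hh
      obtain ⟨k', hk', hk'v⟩ := conj_exp_mem hS X hyp (-t) (g * h * g⁻¹) hh
      have hk'v' : (k' : A)
          = exp ((-t) • X) * ((g * h * g⁻¹ : Aˣ) : A) * exp (-((-t) • X)) := hk'v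
      have heq : h = k' := by
        apply Units.ext
        rw [hk'v']
        rw [neg_smul, neg_neg]
        rw [Units.val_mul, Units.val_mul, hgv, hginv]
        -- goal: ↑h = exp(-(t•X)) * (exp(t•X) * ↑h * exp(-(t•X))) * exp(t•X)
        have hcan1 : exp (-(t • X)) * exp (t • X) = 1 := by
          rw [← exp_add_of_commute ((Commute.refl (t • X)).neg_left)]
          simp
        have hcan2 : exp (t • X) * exp (-(t • X)) = 1 := by
          rw [← exp_add_of_commute ((Commute.refl (t • X)).neg_right)]
          simp
        calc (h : A) = 1 * (h : A) * 1 := by rw [one_mul, mul_one]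
          _ = (exp (-(t • X)) * exp (t • X)) * (h : A)
              * (exp (-(t • X)) * exp (t • X)) := by rw [hcan1]
          _ = exp (-(t • X)) * (exp (t • X) * (h : A) * exp (-(t • X)))
              * exp (t • X) := by
            simp only [mul_assoc]
      rw [heq] at hh ⊢
      exact hk'
  · -- normalizer direction implies fixed points
    intro hnorm k hk
    rw [mem_lie_iff]
    intro r
    set B := (k : A) * X * ((k⁻¹ : Aˣ) : A) with hB
    have hsub : B - X = B + (-X) := sub_eq_add_neg B X
    rw [hsub]
    have h := trotter (r • B) (r • (-X))
    rw [← smul_add] at h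
    refine hS.mem_of_tendsto h (Filter.Eventually.of_forall fun n => ?_)
    refine US_pow ?_ n
    rw [smul_smul, smul_smul]
    set ρ := (n : ℝ)⁻¹ * r with hρ
    have hρB : ρ • B = (k : A) * (ρ • X) * ((k⁻¹ : Aˣ) : A) := by
      rw [hB, mul_smul_comm, smul_mul_assoc]
    have e1 : exp (ρ • B) = (k : A) * exp (ρ • X) * ((k⁻¹ : Aˣ) : A) := by
      rw [hρB, exp_units_conj]
    have e2 : ρ • (-X) = -(ρ • X) := smul_neg ρ X
    obtain ⟨g, hgmem, hgv⟩ := hnorm ρ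
    have hgv' : (g : A) = exp (ρ • X) := hgv
    have hginv : ((g⁻¹ : Aˣ) : A) = exp (-(ρ • X)) := coe_inv_of_val_exp hgv'
    have hgnorm : g ∈ Subgroup.normalizer K := (Subgroup.mem_inf.mp hgmem).2
    have hconj : g * k⁻¹ * g⁻¹ ∈ K :=
      (Subgroup.mem_normalizer_iff.mp hgnorm k⁻¹).mp (K.inv_mem hk)
    refine ⟨k * (g * k⁻¹ * g⁻¹), K.mul_mem hk hconj, ?_⟩
    show ((k * (g * k⁻¹ * g⁻¹) : Aˣ) : A) = exp (ρ • B) * exp (ρ • (-X))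
    rw [e1, e2]
    simp only [Units.val_mul, hgv', hginv, mul_assoc]
end
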